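/- Let q, k be positive integers, let μ_1,…,μ_q and λ_1,…,λ_k be complex numbers with μ_j ≠ λ_i for all j, i, and let ℓ_j ∈ ℂ^p, r_i ∈ ℂ^m, v_j ∈ ℂ^m, w_i ∈ ℂ^p be as in the Loewner data. Then the shifted Loewner matrix 𝕃s satisfies the Sylvester equation M·𝕃s − 𝕃s·Λ = M·𝕍·R − L·𝕎·Λ, where M = diag(μ_1,…,μ_q), Λ = diag(λ_1,…,λ_k), L is the q×p matrix whose j-th row is ℓ_jᵀ, R is the m×k matrix whose i-th column is r_i, 𝕍 is the q×m matrix whose j-th row is v_jᵀ, and 𝕎 is the p×k matrix whose i-th column is w_i. -/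

import Mathlib

open Matrix Complex

/-- The shifted Loewner matrix `𝕃s` satisfies the Sylvester equation
`M·𝕃s − 𝕃s·Λ = M·𝕍·R − L·𝕎·Λ`. -/
theorem shifted_loewner_matrix_sylvester
    (q k p m : ℕ) (hq : 0 < q) (hk : 0 < k)
    (μ : Fin q → ℂ) (lam : Fin k → ℂ)
    (hne : ∀ j i, μ j ≠ lam i)
    (l : Fin q → Fin p → ℂ) (r : Fin k → Fin m → ℂ)
    (v : Fin q → Fin m → ℂ) (w : Fin k → Fin p → ℂ)
    (Ls : Matrix (Fin q) (Fin k) ℂ)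
    (hLs : ∀ j i, Ls j i = (μ j * (v j ⬝ᵥ r i) - lam i * (l j ⬝ᵥ w i)) / (μ j - lam i))
    (M : Matrix (Fin q) (Fin q) ℂ) (hM : M = Matrix.diagonal μ)
    (Λ : Matrix (Fin k) (Fin k) ℂ) (hΛ : Λ = Matrix.diagonal lam)
    (Lmat : Matrix (Fin q) (Fin p) ℂ) (hLmat : ∀ j a, Lmat j a = l j a)
    (R : Matrix (Fin m) (Fin k) ℂ) (hR : ∀ a i, R a i = r i a)
    (V : Matrix (Fin q) (Fin m) ℂ) (hV : ∀ j a, V j a = v j a)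
    (W : Matrix (Fin p) (Fin k) ℂ) (hW : ∀ a i, W a i = w i a) :
    M * Ls - Ls * Λ = M * V * R - Lmat * W * Λ := by
  subst hM hΛ
  ext j i
  have hsub : μ j - lam i ≠ 0 := sub_ne_zero.mpr (hne j i)
  have hVR : (Matrix.diagonal μ * V * R) j i = μ j * (v j ⬝ᵥ r i) := by
    simp [Matrix.mul_apply, Matrix.diagonal, dotProduct, hV, hR, Finset.mul_sum,
      Finset.sum_mul, mul_assoc]
  have hLW : (Lmat * W * Matrix.diagonal lam) j i = lam i * (l j ⬝ᵥ w i) := by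
    simp [Matrix.mul_apply, Matrix.diagonal, dotProduct, hLmat, hW, Finset.mul_sum,
      Finset.sum_mul, mul_comm, mul_assoc, mul_left_comm]
  have h1 : (Matrix.diagonal μ * Ls) j i = μ j * Ls j i := by
    simp [Matrix.diagonal_mul]
  have h2 : (Ls * Matrix.diagonal lam) j i = Ls j i * lam i := by
    simp [Matrix.mul_diagonal]
  simp only [Matrix.sub_apply, h1, h2, hVR, hLW, hLs]
  field_simp
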